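/- ℒ(RNFAwtl) = ℒ(NFAwtl): the repetitive nondeterministic finite automata with translucent letters accept exactly the same languages as ordinary NFAwtls. -/

import Mathlib

/-- A nondeterministic finite automaton with translucent letters (NFAwtl). -/
structure NFAwtl (Q α : Type) where
  τ : Q → Set α
  I : Set Q
  F : Set Q
  δ : Q → α → Set Q
  tr : ∀ q a, a ∈ τ q → δ q a = ∅

namespace NFAwtl

variable {Q α : Type}

/-- One computation step of an NFAwtl: delete the leftmost non-translucent letter
and change state (the head returns to the left end). -/
def Step (A : NFAwtl Q α) : Q × List α → Q × List α → Prop := fun c c' =>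
  ∃ u a v, c.2 = u ++ a :: v ∧ (∀ x ∈ u, x ∈ A.τ c.1) ∧ a ∉ A.τ c.1 ∧
    c'.1 ∈ A.δ c.1 a ∧ c'.2 = u ++ v

/-- Acceptance: from some initial state, reach a configuration whose remaining
letters are all translucent for a final state. -/
def Accepts (A : NFAwtl Q α) (w : List α) : Prop :=
  ∃ q₀ ∈ A.I, ∃ q w', Relation.ReflTransGen A.Step (q₀, w) (q, w') ∧
    (∀ x ∈ w', x ∈ A.τ q) ∧ q ∈ A.F

def lang (A : NFAwtl Q α) : Set (List α) := { w | A.Accepts w }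

/-- A DFAwtl: single initial state and at most one transition per state/letter. -/
def Deterministic (A : NFAwtl Q α) : Prop :=
  (∃ q₀, A.I = {q₀}) ∧ ∀ q a, (A.δ q a).Subsingleton

end NFAwtl

/-- A repetitive NFAwtl (RNFAwtl): on the end-of-tape marker it may accept
(states in `Facc`) or change state via `δend` and continue. -/
structure RNFAwtl (Q α : Type) where
  τ : Q → Set α
  I : Set Q
  δ : Q → α → Set Q
  δend : Q → Set Q
  Facc : Set Q
  tr : ∀ q a, a ∈ τ q → δ q a = ∅
  accEnd : ∀ q, q ∈ Facc → δend q = ∅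

namespace RNFAwtl

variable {Q α : Type}

/-- One computation step of an RNFAwtl: either delete the leftmost
non-translucent letter, or, when all remaining letters are translucent,
change state via a `◁`-transition and continue. -/
def Step (A : RNFAwtl Q α) : Q × List α → Q × List α → Prop := fun c c' =>
  (∃ u a v, c.2 = u ++ a :: v ∧ (∀ x ∈ u, x ∈ A.τ c.1) ∧ a ∉ A.τ c.1 ∧
    c'.1 ∈ A.δ c.1 a ∧ c'.2 = u ++ v)
  ∨ ((∀ x ∈ c.2, x ∈ A.τ c.1) ∧ c'.1 ∈ A.δend c.1 ∧ c'.2 = c.2)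

def Accepts (A : RNFAwtl Q α) (w : List α) : Prop :=
  ∃ q₀ ∈ A.I, ∃ q w', Relation.ReflTransGen A.Step (q₀, w) (q, w') ∧
    (∀ x ∈ w', x ∈ A.τ q) ∧ q ∈ A.Facc

def lang (A : RNFAwtl Q α) : Set (List α) := { w | A.Accepts w }

/-- An RDFAwtl: single initial state and deterministic transitions. -/
def Deterministic (A : RNFAwtl Q α) : Prop :=
  (∃ q₀, A.I = {q₀}) ∧ (∀ q a, (A.δ q a).Subsingleton) ∧ ∀ q, (A.δend q).Subsingleton

end RNFAwtl

/-- A non-returning repetitive NFAwtl (nr-NFAwtl): the head continues from the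
position of the last deleted letter; on the end-of-tape marker it may change
state and return the head to the left end. -/
structure NrNFAwtl (Q α : Type) where
  τ : Q → Set α
  I : Set Q
  δ : Q → α → Set Q
  δend : Q → Set Q
  Facc : Set Q
  tr : ∀ q a, a ∈ τ q → δ q a = ∅
  accEnd : ∀ q, q ∈ Facc → δend q = ∅

namespace NrNFAwtl

variable {Q α : Type}

/-- Configurations are `(x, q, w)`: `x` is the already-skipped prefix, the head
is on the first letter of `w`. -/
def Step (A : NrNFAwtl Q α) :
    List α × Q × List α → List α × Q × List α → Prop := fun c c' =>
  (∃ u a v, c.2.2 = u ++ a :: v ∧ (∀ x ∈ u, x ∈ A.τ c.2.1) ∧ a ∉ A.τ c.2.1 ∧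
    c'.2.1 ∈ A.δ c.2.1 a ∧ c'.1 = c.1 ++ u ∧ c'.2.2 = v)
  ∨ ((∀ x ∈ c.2.2, x ∈ A.τ c.2.1) ∧ c'.2.1 ∈ A.δend c.2.1 ∧ c'.1 = [] ∧
    c'.2.2 = c.1 ++ c.2.2)

def Accepts (A : NrNFAwtl Q α) (w : List α) : Prop :=
  ∃ q₀ ∈ A.I, ∃ x q w', Relation.ReflTransGen A.Step ([], q₀, w) (x, q, w') ∧
    (∀ y ∈ w', y ∈ A.τ q) ∧ q ∈ A.Facc

def lang (A : NrNFAwtl Q α) : Set (List α) := { w | A.Accepts w }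

def Deterministic (A : NrNFAwtl Q α) : Prop :=
  (∃ q₀, A.I = {q₀}) ∧ (∀ q a, (A.δ q a).Subsingleton) ∧ ∀ q, (A.δend q).Subsingleton

end NrNFAwtl

/-- A non-repetitive non-returning NFAwtl (nr-nr-NFAwtl): non-returning, and it
must halt as soon as all remaining letters to the right are translucent. -/
structure NrnrNFAwtl (Q α : Type) where
  τ : Q → Set α
  I : Set Q
  F : Set Q
  δ : Q → α → Set Q
  tr : ∀ q a, a ∈ τ q → δ q a = ∅

namespace NrnrNFAwtl

variable {Q α : Type}

def Step (A : NrnrNFAwtl Q α) :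
    List α × Q × List α → List α × Q × List α → Prop := fun c c' =>
  ∃ u a v, c.2.2 = u ++ a :: v ∧ (∀ x ∈ u, x ∈ A.τ c.2.1) ∧ a ∉ A.τ c.2.1 ∧
    c'.2.1 ∈ A.δ c.2.1 a ∧ c'.1 = c.1 ++ u ∧ c'.2.2 = v

def Accepts (A : NrnrNFAwtl Q α) (w : List α) : Prop :=
  ∃ q₀ ∈ A.I, ∃ x q w', Relation.ReflTransGen A.Step ([], q₀, w) (x, q, w') ∧
    (∀ y ∈ w', y ∈ A.τ q) ∧ q ∈ A.F

def lang (A : NrnrNFAwtl Q α) : Set (List α) := { w | A.Accepts w }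

def Deterministic (A : NrnrNFAwtl Q α) : Prop :=
  (∃ q₀, A.I = {q₀}) ∧ ∀ q a, (A.δ q a).Subsingleton

end NrnrNFAwtl

/-- Language classes. -/
def NFAwtlLangs (α : Type) [Fintype α] : Set (Set (List α)) :=
  { L | ∃ (Q : Type) (_ : Fintype Q) (A : NFAwtl Q α), A.lang = L }

def DFAwtlLangs (α : Type) [Fintype α] : Set (Set (List α)) :=
  { L | ∃ (Q : Type) (_ : Fintype Q) (A : NFAwtl Q α), A.Deterministic ∧ A.lang = L }

def RNFAwtlLangs (α : Type) [Fintype α] : Set (Set (List α)) :=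
  { L | ∃ (Q : Type) (_ : Fintype Q) (A : RNFAwtl Q α), A.lang = L }

def RDFAwtlLangs (α : Type) [Fintype α] : Set (Set (List α)) :=
  { L | ∃ (Q : Type) (_ : Fintype Q) (A : RNFAwtl Q α), A.Deterministic ∧ A.lang = L }

def NrNFAwtlLangs (α : Type) [Fintype α] : Set (Set (List α)) :=
  { L | ∃ (Q : Type) (_ : Fintype Q) (A : NrNFAwtl Q α), A.lang = L }

def NrDFAwtlLangs (α : Type) [Fintype α] : Set (Set (List α)) :=
  { L | ∃ (Q : Type) (_ : Fintype Q) (A : NrNFAwtl Q α), A.Deterministic ∧ A.lang = L }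

def NrnrNFAwtlLangs (α : Type) [Fintype α] : Set (Set (List α)) :=
  { L | ∃ (Q : Type) (_ : Fintype Q) (A : NrnrNFAwtl Q α), A.lang = L }

def NrnrDFAwtlLangs (α : Type) [Fintype α] : Set (Set (List α)) :=
  { L | ∃ (Q : Type) (_ : Fintype Q) (A : NrnrNFAwtl Q α), A.Deterministic ∧ A.lang = L }

/-- The three-letter alphabet {a, b, c}. -/
inductive Al : Type
  | a | b | c
deriving DecidableEq

instance : Fintype Al where
  elems := {Al.a, Al.b, Al.c}
  complete := by intro x; cases x <;> simp

open Relation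

namespace RNFAwtlSim

variable {Q α : Type}

/-- The relation describing a single `◁`-transition together with the induced
restriction of the set of letters that may still occur on the tape. -/
def R (A : RNFAwtl Q α) : Q × Set α → Q × Set α → Prop :=
  fun c c' => c'.1 ∈ A.δend c.1 ∧ c'.2 = c.2 ∩ A.τ c.1

/-- A chain of `◁`-transitions. -/
def ER (A : RNFAwtl Q α) : Q × Set α → Q × Set α → Prop :=
  ReflTransGen (R A)

lemma ER_mono {A : RNFAwtl Q α} {c d} (h : ER A c d) : d.2 ⊆ c.2 := by
  induction h with
  | refl => exact subset_rfl
  | tail _ h2 ih => exact h2.2 ▸ (Set.inter_subset_left.trans ih)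

lemma ER_steps {A : RNFAwtl Q α} {c d} (h : ER A c d) (w : List α)
    (hw : ∀ x ∈ w, x ∈ d.2) :
    ReflTransGen A.Step (c.1, w) (d.1, w) := by
  induction h using ReflTransGen.head_induction_on with
  | refl => exact .refl
  | @head a b h1 h2 ih =>
    refine ReflTransGen.head (b := (b.1, w)) (Or.inr ⟨fun x hx => ?_, h1.1, rfl⟩) ih
    have hx2 := ER_mono h2 (hw x hx)
    rw [h1.2] at hx2
    exact hx2.2

/-- The simulating NFAwtl: states remember a set `Γ` of letters that may
still occur on the tape; `◁`-transitions are merged with the next reading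
transition (or with the initial state). -/
def toN (A : RNFAwtl Q α) : NFAwtl (Q × Set α) α where
  τ := fun p => A.τ p.1 ∩ p.2
  I := {p | ∃ q₀ ∈ A.I, ER A (q₀, Set.univ) p}
  F := {p | p.1 ∈ A.Facc}
  δ := fun p a =>
    {p' | a ∈ p.2 ∧ a ∉ A.τ p.1 ∧ ∃ q' ∈ A.δ p.1 a, ER A (q', p.2) p'}
  tr := fun p a ha => by
    ext p'
    simp only [Set.mem_setOf_eq, Set.mem_empty_iff_false, iff_false]
    rintro ⟨-, h2, -⟩
    exact h2 ha.1

lemma sound {A : RNFAwtl Q α} {c d : (Q × Set α) × List α}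
    (h : ReflTransGen (toN A).Step c d) (hd : ∀ x ∈ d.2, x ∈ d.1.2) :
    ReflTransGen A.Step (c.1.1, c.2) (d.1.1, d.2) ∧ ∀ x ∈ c.2, x ∈ c.1.2 := by
  induction h using ReflTransGen.head_induction_on with
  | refl => exact ⟨.refl, hd⟩
  | @head c mid h1 h2 ih =>
    obtain ⟨u, a, v, hc2, hu, hna, hδ, he2⟩ := h1
    obtain ⟨haΓ, haτ, q', hq', hER⟩ := hδ
    obtain ⟨run2, hinv⟩ := ih
    have hwmid : ∀ x ∈ u ++ v, x ∈ mid.1.2 := by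
      intro x hx; exact hinv x (he2 ▸ hx)
    constructor
    · refine ReflTransGen.head (b := (q', u ++ v))
        (Or.inl ⟨u, a, v, hc2, fun x hx => (hu x hx).1, haτ, hq', rfl⟩) ?_
      have mids := ER_steps hER (u ++ v) hwmid
      have run2' : ReflTransGen A.Step (mid.1.1, u ++ v) (d.1.1, d.2) := by
        rw [← he2]; exact run2
      exact mids.trans run2'
    · intro x hx
      rw [hc2] at hx
      rcases List.mem_append.1 hx with hx | hx
      · exact (hu x hx).2
      · rcases List.mem_cons.1 hx with rfl | hx
        · exact haΓ
        · exact ER_mono hER (hwmid x (List.mem_append.2 (Or.inr hx)))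

lemma complete {A : RNFAwtl Q α} {c d : Q × List α}
    (h : ReflTransGen A.Step c d) :
    ∀ Γ : Set α, (∀ x ∈ c.2, x ∈ Γ) →
    ∃ e : Q × Set α, ER A (c.1, Γ) e ∧ ∃ Γ' : Set α,
      ReflTransGen (toN A).Step ((e, c.2) : (Q × Set α) × List α)
        ((d.1, Γ'), d.2) ∧ ∀ x ∈ d.2, x ∈ Γ' := by
  induction h using ReflTransGen.head_induction_on with
  | refl =>
    intro Γ hΓ
    exact ⟨(d.1, Γ), .refl, Γ, .refl, hΓ⟩
  | @head c c₁ h1 h2 ih =>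
    intro Γ hΓ
    rcases h1 with ⟨u, a, v, hc2, hu, hna, hδ, he2⟩ | ⟨hall, hδe, he2⟩
    · -- reading step
      have hΓ1 : ∀ x ∈ c₁.2, x ∈ Γ := by
        intro x hx
        rw [he2] at hx
        refine hΓ x ?_
        rw [hc2]
        rcases List.mem_append.1 hx with hx | hx
        · exact List.mem_append.2 (Or.inl hx)
        · exact List.mem_append.2 (Or.inr (List.mem_cons_of_mem _ hx))
      obtain ⟨e, hER, Γ', run2, hΓ'⟩ := ih Γ hΓ1
      refine ⟨(c.1, Γ), .refl, Γ', ?_, hΓ'⟩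
      refine ReflTransGen.head ?_ run2
      refine ⟨u, a, v, hc2, fun x hx => ⟨hu x hx, hΓ x (hc2 ▸ ?_)⟩,
        fun hmem => hna hmem.1, ?_, he2⟩
      · exact List.mem_append.2 (Or.inl hx)
      · exact ⟨hΓ a (hc2 ▸ List.mem_append.2 (Or.inr List.mem_cons_self)),
          hna, c₁.1, hδ, hER⟩
    · -- ◁-transition
      have hΓ1 : ∀ x ∈ c₁.2, x ∈ Γ ∩ A.τ c.1 := by
        intro x hx
        rw [he2] at hx
        exact ⟨hΓ x hx, hall x hx⟩
      obtain ⟨e, hER, Γ', run2, hΓ'⟩ := ih (Γ ∩ A.τ c.1) hΓ1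
      refine ⟨e, ReflTransGen.head ⟨hδe, rfl⟩ hER, Γ', ?_, hΓ'⟩
      rw [he2] at run2
      exact run2

lemma lang_toN (A : RNFAwtl Q α) : (toN A).lang = A.lang := by
  ext w
  constructor
  · rintro ⟨P₀, ⟨q₀, hq₀, hER0⟩, P, w', run, htr, hF⟩
    have hd : ∀ x ∈ ((P, w') : (Q × Set α) × List α).2,
        x ∈ ((P, w') : (Q × Set α) × List α).1.2 := fun x hx => (htr x hx).2
    obtain ⟨runA, hinv⟩ := sound (c := (P₀, w)) (d := (P, w')) run hd
    have init := ER_steps hER0 w hinv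
    exact ⟨q₀, hq₀, P.1, w', init.trans runA, fun x hx => (htr x hx).1, hF⟩
  · rintro ⟨q₀, hq₀, q, w', run, htr, hF⟩
    obtain ⟨e, hER, Γ', run2, hΓ'⟩ :=
      complete (c := (q₀, w)) (d := (q, w')) run Set.univ
        (fun x _ => Set.mem_univ x)
    exact ⟨e, ⟨q₀, hq₀, hER⟩, (q, Γ'), w', run2,
      fun x hx => ⟨htr x hx, hΓ' x hx⟩, hF⟩

/-- Embedding an NFAwtl as an RNFAwtl with no `◁`-transitions. -/
def ofN (A : NFAwtl Q α) : RNFAwtl Q α where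
  τ := A.τ
  I := A.I
  δ := A.δ
  δend := fun _ => ∅
  Facc := A.F
  tr := A.tr
  accEnd := fun _ _ => rfl

lemma ofN_step (A : NFAwtl Q α) : (ofN A).Step = A.Step := by
  funext c c'
  simp only [RNFAwtl.Step, NFAwtl.Step, ofN, eq_iff_iff]
  constructor
  · rintro (h | ⟨-, h, -⟩)
    · exact h
    · exact absurd h (Set.notMem_empty _)
  · exact Or.inl

lemma lang_ofN (A : NFAwtl Q α) : (ofN A).lang = A.lang := by
  ext w
  simp only [RNFAwtl.lang, NFAwtl.lang, RNFAwtl.Accepts, NFAwtl.Accepts,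
    Set.mem_setOf_eq, ofN_step]
  rfl

end RNFAwtlSim

/-- ℒ(RNFAwtl) = ℒ(NFAwtl). -/
theorem RNFAwtl_eq_NFAwtl (α : Type) [Fintype α] :
    RNFAwtlLangs α = NFAwtlLangs α := by
  ext L
  constructor
  · rintro ⟨Q, _, A, rfl⟩
    have : Finite (Q × Set α) := by infer_instance
    exact ⟨Q × Set α, Fintype.ofFinite _, RNFAwtlSim.toN A, RNFAwtlSim.lang_toN A⟩
  · rintro ⟨Q, _, A, rfl⟩
    exact ⟨Q, ‹Fintype Q›, RNFAwtlSim.ofN A, RNFAwtlSim.lang_ofN A⟩
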